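/- If (x,y) ∉ Â ∪ B̂ (that is, x ≥ k and y ≤ v̂), then f(x,y) ∉ B̂; in other words, once a trajectory has left region B̂ it cannot return to B̂. -/

import Mathlib

/-- No return to region `B̂`: if `(x,y) ∉ Â ∪ B̂` (i.e. `x ≥ k` and `y ≤ v̂`),
then `f(x,y) ∉ B̂`. -/
theorem chialvo_no_return_B
    (a b c k : ℝ)
    (ha : a ∈ Set.Ioo (0:ℝ) 1) (hb : b ∈ Set.Ioo (0:ℝ) 1)
    (hc : c ∈ Set.Ioo (0:ℝ) 1) (hk : 0 < k)
    (f : ℝ × ℝ → ℝ × ℝ)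
    (hf : ∀ p : ℝ × ℝ,
      f p = (p.1 ^ 2 * Real.exp (p.2 - p.1) + k, a * p.2 - b * p.1 + c))
    (v : ℝ) (hv : v = (c - b * k) / (1 - a))
    (A B : Set (ℝ × ℝ))
    (hA : A = {p : ℝ × ℝ | p.1 < k})
    (hB : B = {p : ℝ × ℝ | p.1 ≥ k ∧ p.2 > v}) :
    ∀ p : ℝ × ℝ, p ∉ A ∪ B → f p ∉ B := by
  intro p hp hfB
  obtain ⟨ha0, ha1⟩ := ha
  obtain ⟨hb0, hb1⟩ := hb
  subst hA hB
  simp only [Set.mem_union, Set.mem_setOf_eq, not_or, not_lt, not_and] at hp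
  obtain ⟨hxk, hkB⟩ := hp
  have hyv : p.2 ≤ v := hkB hxk
  rw [hf p] at hfB
  obtain ⟨_, h2⟩ := hfB
  simp only at h2
  have hav : a * v - b * k + c = v := by
    have h1a : (1 : ℝ) - a ≠ 0 := by linarith
    rw [hv]
    field_simp
    ring
  have : a * p.2 - b * p.1 + c ≤ v := by
    nlinarith
  linarith
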